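/- Let n ≥ 2, let w be a symmetric, nonnegative weight function on Fin n with zero diagonal, let L be the associated weighted graph Laplacian, and let v be a vertex with weighted degree W(v) = ∑ j, w v j > 0. Then the Schur complement of L eliminating v satisfies SC(v) = L − STAR(v) + CLIQUE(v); that is, L − (1/(L v v)) • (L·e_v)·(L·e_v)ᵀ = L − ∑ j, (w v j) • Δ(v,j) + (1/(2·W(v))) • ∑ j, ∑ k, (w v j)·(w v k) • Δ(j,k). -/
import Mathlib


open Matrix BigOperators

/-- The elementary Laplacian `Δ(i,j) = (e_i − e_j)(e_i − e_j)ᵀ`. -/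
noncomputable def elemLap {n : ℕ} (i j : Fin n) : Matrix (Fin n) (Fin n) ℝ :=
  Matrix.vecMulVec (Pi.single i 1 - Pi.single j 1) (Pi.single i 1 - Pi.single j 1)

/-- The weighted graph Laplacian of a weight function `w`. -/
noncomputable def lap {n : ℕ} (w : Fin n → Fin n → ℝ) : Matrix (Fin n) (Fin n) ℝ :=
  Matrix.of fun i j => if i = j then ∑ k, w i k else -(w i j)

theorem schur_complement_eq_star_clique {n : ℕ} (hn : 2 ≤ n)
    (w : Fin n → Fin n → ℝ)
    (hsymm : ∀ i j, w i j = w j i) (hnonneg : ∀ i j, 0 ≤ w i j)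
    (hdiag : ∀ i, w i i = 0) (v : Fin n) (hdeg : 0 < ∑ j, w v j) :
    lap w - (1 / (lap w v v)) •
        Matrix.vecMulVec ((lap w).mulVec (Pi.single v 1)) ((lap w).mulVec (Pi.single v 1))
      = lap w - (∑ j, (w v j) • elemLap v j)
        + (1 / (2 * ∑ j, w v j)) • ∑ j, ∑ k, (w v j * w v k) • elemLap j k := by
  have hW0 : (∑ j, w v j) ≠ 0 := ne_of_gt hdeg
  have hW0' : (∑ j, w j v) ≠ 0 := by
    rwa [show (∑ j, w j v) = ∑ j, w v j from Finset.sum_congr rfl fun x _ => hsymm x v]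
  have hmv : ∀ k, (lap w).mulVec (Pi.single v 1) k = lap w k v := by
    intro k; simp [Matrix.mulVec_single]
  ext i j
  simp only [Matrix.sub_apply, Matrix.add_apply, Matrix.smul_apply, Matrix.vecMulVec_apply,
    Matrix.sum_apply, hmv, smul_eq_mul, elemLap, lap, Matrix.of_apply, Pi.sub_apply,
    Pi.single_apply]
  by_cases hi : i = v <;> by_cases hj : j = v <;> by_cases hij : i = j <;>
    subst_vars <;>
    simp [hdiag, mul_ite, ite_mul, sub_mul, mul_sub, Finset.sum_sub_distrib,
      Finset.sum_ite_eq, Finset.sum_ite_eq', *, ← Finset.sum_mul,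
      ← Finset.mul_sum, div_eq_mul_inv, mul_comm, mul_assoc, mul_left_comm] <;>
    (try field_simp) <;> (try ring)
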